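/- arXiv:1910.12812 — 2 statements merged into one kernel-verified Lean document; each statement's English description precedes it below -/
import Mathlib

section
/- Let 𝔤 be the 8-dimensional stratified Lie algebra of step 3 defined below and let λ ∈ ℝ with λ ≠ 1. Then the Lie subalgebra of 𝔤 generated by the subspace W¹ = span{X₁, X₂ + λX₀, X₃} of the first stratum is a 7-dimensional stratified Lie algebra of step 3 with first stratum W¹ (a Carnot subalgebra of 𝔤), and it is isomorphic as a stratified Lie algebra to 𝔤_λ. -/
/-!
Statement 0: the Lie subalgebra of the 8-dimensional stratified Lie algebra 𝔤
generated by `W¹ = span {X₁, X₂ + λ X₀, X₃}` is a 7-dimensional Carnot subalgebra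
of step 3 with first stratum `W¹`, isomorphic as a stratified Lie algebra to `𝔤_λ`.
-/

open Module

/-- The span of all brackets of elements of two submodules of a Lie algebra. -/
def bracketSpan {L : Type*} [LieRing L] [LieAlgebra ℝ L] (A B : Submodule ℝ L) :
    Submodule ℝ L :=
  Submodule.span ℝ {z : L | ∃ x ∈ A, ∃ y ∈ B, z = ⁅x, y⁆}

/-- `V` is a stratification of step `s` of the real Lie algebra `L`:
`L = V 0 ⊕ ⋯ ⊕ V (s-1)`, `V (i+1) = ⁅V 0, V i⁆` for all `i` (in particular
`⁅V 0, V (s-1)⁆ = 0`, since `V i = ⊥` for `i ≥ s`), and `V (s-1) ≠ ⊥`. -/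
structure IsStratification (L : Type*) [LieRing L] [LieAlgebra ℝ L]
    (s : ℕ) (V : ℕ → Submodule ℝ L) : Prop where
  indep : iSupIndep V
  supEq : (⨆ i, V i) = ⊤
  last_ne_bot : V (s - 1) ≠ ⊥
  bot_of_ge : ∀ i, s ≤ i → V i = ⊥
  step : ∀ i, V (i + 1) = bracketSpan (V 0) (V i)

/-- Structure constants of the 8-dimensional step-3 Carnot algebra 𝔤, with respect to an
(ordered) basis `(X₀, X₁, …, X₇)`:  `[X₁,X₂] = X₄`, `[X₁,X₃] = −X₆`, `[X₁,X₀] = −X₄`,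
`[X₂,X₃] = X₅`, `[X₁,X₅] = −X₇`, `[X₃,X₄] = X₇`, `[X₀,X₆] = X₇`, all other brackets of
basis vectors being zero (up to skew-symmetry). -/
def gBr {M : Type*} [AddCommGroup M] (b : Fin 8 → M) (i j : Fin 8) : M :=
  match (i : ℕ), (j : ℕ) with
  | 1, 2 => b 4
  | 2, 1 => -b 4
  | 1, 3 => -b 6
  | 3, 1 => b 6
  | 1, 0 => -b 4
  | 0, 1 => b 4
  | 2, 3 => b 5
  | 3, 2 => -b 5
  | 1, 5 => -b 7
  | 5, 1 => b 7
  | 3, 4 => b 7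
  | 4, 3 => -b 7
  | 0, 6 => b 7
  | 6, 0 => -b 7
  | _, _ => 0

/-- Structure constants of the 7-dimensional step-3 Carnot algebra `𝔤_μ`, with respect to an
(ordered) basis `(X₁, …, X₇)` (indexed here by `0, …, 6`): `[X₁,X₂] = X₄`, `[X₁,X₃] = −X₆`,
`[X₂,X₃] = X₅`, `[X₁,X₅] = −X₇`, `[X₂,X₆] = μX₇`, `[X₃,X₄] = (1−μ)X₇`, all other brackets
of basis vectors being zero (up to skew-symmetry). -/
def gmuBr {M : Type*} [AddCommGroup M] [Module ℝ M] (μ : ℝ) (c : Fin 7 → M)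
    (i j : Fin 7) : M :=
  match (i : ℕ), (j : ℕ) with
  | 0, 1 => c 3
  | 1, 0 => -c 3
  | 0, 2 => -c 5
  | 2, 0 => c 5
  | 1, 2 => c 4
  | 2, 1 => -c 4
  | 0, 4 => -c 6
  | 4, 0 => c 6
  | 1, 5 => μ • c 6
  | 5, 1 => -(μ • c 6)
  | 2, 3 => (1 - μ) • c 6
  | 3, 2 => -((1 - μ) • c 6)
  | _, _ => 0

section Aux0
open Submodule

lemma gmuBr_map {M N : Type*} [AddCommGroup M] [Module ℝ M] [AddCommGroup N] [Module ℝ N]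
    (f : M →ₗ[ℝ] N) (μ : ℝ) (c : Fin 7 → M) (i j : Fin 7) :
    f (gmuBr μ c i j) = gmuBr μ (fun k => f (c k)) i j := by
  fin_cases i <;> fin_cases j <;> simp [gmuBr]

lemma gmuBr_mem_span_range {M : Type*} [AddCommGroup M] [Module ℝ M] (μ : ℝ)
    (c : Fin 7 → M) (i j : Fin 7) : gmuBr μ c i j ∈ span ℝ (Set.range c) := by
  have hk : ∀ k : Fin 7, c k ∈ span ℝ (Set.range c) := fun k => subset_span ⟨k, rfl⟩
  fin_cases i <;> fin_cases j <;> simp only [gmuBr] <;>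
    first
    | exact (span ℝ (Set.range c)).zero_mem
    | exact hk _
    | exact neg_mem (hk _)
    | exact smul_mem _ _ (hk _)
    | exact neg_mem (smul_mem _ _ (hk _))

end Aux0
section Aux
open Submodule

lemma lie_mem_of_span {L : Type*} [LieRing L] [LieAlgebra ℝ L] {s t : Set L}
    {C : Submodule ℝ L} (h : ∀ x ∈ s, ∀ y ∈ t, ⁅x, y⁆ ∈ C) :
    ∀ x ∈ span ℝ s, ∀ y ∈ span ℝ t, ⁅x, y⁆ ∈ C := by
  intro x hx
  induction hx using Submodule.span_induction with
  | mem x hxs =>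
    intro y hy
    induction hy using Submodule.span_induction with
    | mem y hyt => exact h x hxs y hyt
    | zero => rw [lie_zero]; exact C.zero_mem
    | add a b _ _ ha hb => rw [lie_add]; exact C.add_mem ha hb
    | smul r a _ ha => rw [lie_smul]; exact C.smul_mem r ha
  | zero => intro y hy; rw [zero_lie]; exact C.zero_mem
  | add a b _ _ ha hb => intro y hy; rw [add_lie]; exact C.add_mem (ha y hy) (hb y hy)
  | smul r a _ ha => intro y hy; rw [smul_lie]; exact C.smul_mem r (ha y hy)

lemma bracketSpan_span_le {L : Type*} [LieRing L] [LieAlgebra ℝ L] {s t : Set L}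
    {C : Submodule ℝ L} (h : ∀ x ∈ s, ∀ y ∈ t, ⁅x, y⁆ ∈ C) :
    bracketSpan (span ℝ s) (span ℝ t) ≤ C := by
  rw [bracketSpan, Submodule.span_le]
  rintro z ⟨x, hx, y, hy, rfl⟩
  exact lie_mem_of_span h x hx y hy

lemma lie_mem_bracketSpan {L : Type*} [LieRing L] [LieAlgebra ℝ L] {A B : Submodule ℝ L}
    {x y : L} (hx : x ∈ A) (hy : y ∈ B) : ⁅x, y⁆ ∈ bracketSpan A B :=
  Submodule.subset_span ⟨x, hx, y, hy, rfl⟩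

lemma bracketSpan_bot {L : Type*} [LieRing L] [LieAlgebra ℝ L] (A : Submodule ℝ L) :
    bracketSpan A ⊥ = ⊥ := by
  refine le_bot_iff.mp ?_
  rw [bracketSpan, Submodule.span_le]
  rintro z ⟨x, hx, y, hy, rfl⟩
  rw [Submodule.mem_bot] at hy
  simp [hy]

def stratV {N : Type*} [AddCommGroup N] [Module ℝ N] (d : Fin 7 → N) : ℕ → Submodule ℝ N
  | 0 => span ℝ {d 0, d 1, d 2}
  | 1 => span ℝ {d 3, d 4, d 5}
  | 2 => span ℝ {d 6}
  | _ + 3 => ⊥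

lemma stratV_indep {N : Type*} [AddCommGroup N] [Module ℝ N] (d : Basis (Fin 7) ℝ N) :
    iSupIndep (stratV fun k => d k) := by
  have key : ∀ (T U : Set (Fin 7)), Disjoint T U →
      Disjoint (span ℝ (d '' T)) (span ℝ (d '' U)) := fun T U hTU =>
    d.linearIndependent.disjoint_span_image hTU
  have himg0 : (stratV fun k => d k) 0 = span ℝ (d '' {0, 1, 2}) := by
    simp [stratV, Set.image_insert_eq]
  have himg1 : (stratV fun k => d k) 1 = span ℝ (d '' {3, 4, 5}) := by
    simp [stratV, Set.image_insert_eq]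
  have himg2 : (stratV fun k => d k) 2 = span ℝ (d '' {6}) := by
    simp [stratV]
  rw [iSupIndep_def]
  intro i
  match i with
  | (n + 3) => exact disjoint_bot_left
  | 0 =>
    rw [himg0]
    refine (key {0,1,2} {3,4,5,6} (by rw [Set.disjoint_left]; rintro a (rfl|rfl|rfl) hb <;> simp_all)).mono_right (iSup_le fun j => iSup_le fun hj => ?_)
    match j with
    | 0 => exact absurd rfl hj
    | 1 => rw [himg1]; exact span_mono (Set.image_mono (by intro a ha; simp only [Set.mem_insert_iff, Set.mem_singleton_iff] at *; tauto))
    | 2 => rw [himg2]; exact span_mono (Set.image_mono (by intro a ha; simp only [Set.mem_insert_iff, Set.mem_singleton_iff] at *; tauto))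
    | (n+3) => exact bot_le
  | 1 =>
    rw [himg1]
    refine (key {3,4,5} {0,1,2,6} (by rw [Set.disjoint_left]; rintro a (rfl|rfl|rfl) hb <;> simp_all)).mono_right (iSup_le fun j => iSup_le fun hj => ?_)
    match j with
    | 0 => rw [himg0]; exact span_mono (Set.image_mono (by intro a ha; simp only [Set.mem_insert_iff, Set.mem_singleton_iff] at *; tauto))
    | 1 => exact absurd rfl hj
    | 2 => rw [himg2]; exact span_mono (Set.image_mono (by intro a ha; simp only [Set.mem_insert_iff, Set.mem_singleton_iff] at *; tauto))
    | (n+3) => exact bot_le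
  | 2 =>
    rw [himg2]
    refine (key {6} {0,1,2,3,4,5} (by rw [Set.disjoint_left]; rintro a rfl hb; simp_all)).mono_right (iSup_le fun j => iSup_le fun hj => ?_)
    match j with
    | 0 => rw [himg0]; exact span_mono (Set.image_mono (by intro a ha; simp only [Set.mem_insert_iff, Set.mem_singleton_iff] at *; tauto))
    | 1 => rw [himg1]; exact span_mono (Set.image_mono (by intro a ha; simp only [Set.mem_insert_iff, Set.mem_singleton_iff] at *; tauto))
    | 2 => exact absurd rfl hj
    | (n+3) => exact bot_le

lemma isStratification_of_basis {N : Type*} [LieRing N] [LieAlgebra ℝ N] (μ : ℝ)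
    (d : Basis (Fin 7) ℝ N) (hd : ∀ i j, ⁅d i, d j⁆ = gmuBr μ (fun k => d k) i j) :
    IsStratification N 3 (stratV fun k => d k) := by
  have h0 : (stratV fun k => d k) 0 = span ℝ {d 0, d 1, d 2} := rfl
  have h1 : (stratV fun k => d k) 1 = span ℝ {d 3, d 4, d 5} := rfl
  have h2 : (stratV fun k => d k) 2 = span ℝ {d 6} := rfl
  have hmem01 : ∀ k : Fin 7, k = 0 ∨ k = 1 ∨ k = 2 → d k ∈ (stratV fun k => d k) 0 := by
    rintro k (rfl|rfl|rfl) <;> exact subset_span (by simp)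
  refine ⟨stratV_indep d, ?_, ?_, ?_, ?_⟩
  · rw [eq_top_iff, ← d.span_eq]
    refine Submodule.span_le.mpr ?_
    rintro x ⟨k, rfl⟩
    fin_cases k
    · exact le_iSup (stratV fun k => d k) 0 (subset_span (by simp))
    · exact le_iSup (stratV fun k => d k) 0 (subset_span (by simp))
    · exact le_iSup (stratV fun k => d k) 0 (subset_span (by simp))
    · exact le_iSup (stratV fun k => d k) 1 (subset_span (by simp))
    · exact le_iSup (stratV fun k => d k) 1 (subset_span (by simp))
    · exact le_iSup (stratV fun k => d k) 1 (subset_span (by simp))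
    · exact le_iSup (stratV fun k => d k) 2 (subset_span (by simp))
  · show (stratV fun k => d k) 2 ≠ ⊥
    rw [h2]
    simpa [span_singleton_eq_bot] using d.ne_zero 6
  · intro i hi
    obtain ⟨n, rfl⟩ : ∃ n, i = n + 3 := ⟨i - 3, by omega⟩
    rfl
  · intro i
    match i with
    | 0 =>
      rw [h0, h1]
      apply le_antisymm
      · refine Submodule.span_le.mpr ?_
        rintro z (rfl|rfl|rfl)
        · have : d 3 = ⁅d 0, d 1⁆ := by rw [hd]; simp only [gmuBr, Fin.isValue, Fin.val_zero, Fin.val_one, Fin.val_two, Fin.coe_ofNat_eq_mod, Nat.reduceMod]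
          rw [this]; exact lie_mem_bracketSpan (subset_span (by simp)) (subset_span (by simp))
        · have : d 4 = ⁅d 1, d 2⁆ := by rw [hd]; simp only [gmuBr, Fin.isValue, Fin.val_zero, Fin.val_one, Fin.val_two, Fin.coe_ofNat_eq_mod, Nat.reduceMod]
          rw [this]; exact lie_mem_bracketSpan (subset_span (by simp)) (subset_span (by simp))
        · have : d 5 = ⁅d 2, d 0⁆ := by rw [hd]; simp only [gmuBr, Fin.isValue, Fin.val_zero, Fin.val_one, Fin.val_two, Fin.coe_ofNat_eq_mod, Nat.reduceMod]
          rw [this]; exact lie_mem_bracketSpan (subset_span (by simp)) (subset_span (by simp))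
      · refine bracketSpan_span_le ?_
        rintro x (rfl|rfl|rfl) y (rfl|rfl|rfl) <;> rw [hd] <;> simp only [gmuBr] <;>
          first
          | exact zero_mem _
          | exact subset_span (Set.mem_insert _ _)
          | exact subset_span (Set.mem_insert_of_mem _ (Set.mem_insert _ _))
          | exact subset_span (Set.mem_insert_of_mem _ (Set.mem_insert_of_mem _ (Set.mem_singleton _)))
          | exact neg_mem (subset_span (Set.mem_insert _ _))
          | exact neg_mem (subset_span (Set.mem_insert_of_mem _ (Set.mem_insert _ _)))
          | exact neg_mem (subset_span (Set.mem_insert_of_mem _ (Set.mem_insert_of_mem _ (Set.mem_singleton _))))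
    | 1 =>
      rw [h1, h2]
      apply le_antisymm
      · refine Submodule.span_le.mpr ?_
        rintro z rfl
        have : d 6 = -⁅d 0, d 4⁆ := by rw [hd]; simp only [gmuBr, Fin.isValue, Fin.val_zero, Fin.val_one, Fin.val_two, Fin.coe_ofNat_eq_mod, Nat.reduceMod, neg_neg]
        rw [this]
        exact neg_mem (lie_mem_bracketSpan (subset_span (by simp))
          (subset_span (Set.mem_insert_of_mem _ (Set.mem_insert _ _))))
      · refine bracketSpan_span_le ?_
        rintro x (rfl|rfl|rfl) y (rfl|rfl|rfl) <;> rw [hd] <;> simp only [gmuBr] <;>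
          first
          | exact zero_mem _
          | exact subset_span (Set.mem_singleton _)
          | exact neg_mem (subset_span (Set.mem_singleton _))
          | exact smul_mem _ _ (subset_span (Set.mem_singleton _))
          | exact neg_mem (smul_mem _ _ (subset_span (Set.mem_singleton _)))
    | 2 =>
      show ⊥ = bracketSpan _ _
      rw [h0, h2]
      refine le_antisymm bot_le (bracketSpan_span_le ?_)
      rintro x (rfl|rfl|rfl) y rfl <;> rw [hd] <;> simp only [gmuBr] <;> exact zero_mem _
    | (n + 3) =>
      show (⊥ : Submodule ℝ N) = bracketSpan _ ⊥
      rw [bracketSpan_bot]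


def Zfun {L : Type*} [AddCommGroup L] [Module ℝ L] (lam : ℝ) (b : Fin 8 → L) :
    Fin 7 → L := fun i =>
  match (i : ℕ) with
  | 0 => b 1
  | 1 => b 2 + lam • b 0
  | 2 => b 3
  | 3 => (1 - lam) • b 4
  | 4 => b 5
  | 5 => b 6
  | _ => b 7

lemma Zfun_br {L : Type*} [LieRing L] [LieAlgebra ℝ L] (lam : ℝ) (b : Fin 8 → L)
    (hb : ∀ i j : Fin 8, ⁅b i, b j⁆ = gBr b i j) :
    ∀ i j : Fin 7, ⁅Zfun lam b i, Zfun lam b j⁆ = gmuBr lam (Zfun lam b) i j := by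
  intro i j
  fin_cases i <;> fin_cases j <;>
    simp only [Zfun, gmuBr, lie_add, add_lie, lie_smul, smul_lie, hb, gBr, Fin.isValue, Fin.val_zero, Fin.val_one, Fin.val_two, Fin.coe_ofNat_eq_mod, Nat.reduceMod] <;>
    module

lemma Zfun_li {L : Type*} [AddCommGroup L] [Module ℝ L] (lam : ℝ) (hlam : lam ≠ 1)
    (b : Basis (Fin 8) ℝ L) : LinearIndependent ℝ (Zfun lam fun k => b k) := by
  rw [Fintype.linearIndependent_iff]
  intro g hg
  have hk : ∀ k : Fin 8, (b.repr (∑ i : Fin 7, g i • Zfun lam (fun k => b k) i)) k = 0 := by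
    rw [hg]; simp
  simp only [Fin.sum_univ_seven, Zfun, map_add, map_smul, map_sum, Finsupp.coe_add,
    Finsupp.coe_smul, Pi.add_apply, Pi.smul_apply, Basis.repr_self, smul_add,
    Finsupp.smul_single, smul_eq_mul, mul_one] at hk
  have h0 := hk 0
  have h1 := hk 1
  have h2 := hk 2
  have h3 := hk 3
  have h4 := hk 4
  have h5 := hk 5
  have h6 := hk 6
  have h7 := hk 7
  simp only [Finsupp.single_apply] at h0 h1 h2 h3 h4 h5 h6 h7
  norm_num at h0 h1 h2 h3 h4 h5 h6 h7
  have hne : (1 : ℝ) - lam ≠ 0 := sub_ne_zero_of_ne (Ne.symm hlam)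
  intro i
  fin_cases i <;> simp_all

lemma map_lie_of_basis {N P : Type*} [LieRing N] [LieAlgebra ℝ N] [LieRing P]
    [LieAlgebra ℝ P] {ι : Type*} (dN : Basis ι ℝ N) (f : N →ₗ[ℝ] P)
    (hf : ∀ i j, f ⁅dN i, dN j⁆ = ⁅f (dN i), f (dN j)⁆) (x y : N) :
    f ⁅x, y⁆ = ⁅f x, f y⁆ := by
  let B1 : N →ₗ[ℝ] N →ₗ[ℝ] P := LinearMap.mk₂ ℝ (fun x y => f ⁅x, y⁆)
    (fun m n o => by simp only [add_lie, map_add]) (fun r m n => by simp only [smul_lie, map_smul])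
    (fun m n o => by simp only [lie_add, map_add]) (fun r m n => by simp only [lie_smul, map_smul])
  let B2 : N →ₗ[ℝ] N →ₗ[ℝ] P := LinearMap.mk₂ ℝ (fun x y => ⁅f x, f y⁆)
    (fun m n o => by simp only [map_add, add_lie]) (fun r m n => by simp only [map_smul, smul_lie])
    (fun m n o => by simp only [map_add, lie_add]) (fun r m n => by simp only [map_smul, lie_smul])
  have hB : B1 = B2 := dN.ext fun i => dN.ext fun j => hf i j
  exact LinearMap.congr_fun (LinearMap.congr_fun hB x) y

lemma map_span_eq3 {N P : Type*} [AddCommGroup N] [Module ℝ N] [AddCommGroup P]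
    [Module ℝ P] (F : N →ₗ[ℝ] P) (x1 x2 x3 : N) (y1 y2 y3 : P)
    (h1 : F x1 = y1) (h2 : F x2 = y2) (h3 : F x3 = y3) :
    Submodule.map F (Submodule.span ℝ {x1, x2, x3}) = Submodule.span ℝ {y1, y2, y3} := by
  rw [Submodule.map_span]
  congr 1
  rw [Set.image_insert_eq, Set.image_insert_eq, Set.image_singleton, h1, h2, h3]

lemma map_span_eq1 {N P : Type*} [AddCommGroup N] [Module ℝ N] [AddCommGroup P]
    [Module ℝ P] (F : N →ₗ[ℝ] P) (x1 : N) (y1 : P) (h1 : F x1 = y1) :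
    Submodule.map F (Submodule.span ℝ {x1}) = Submodule.span ℝ {y1} := by
  rw [Submodule.map_span]
  congr 1
  rw [Set.image_singleton, h1]

end Aux

theorem stmt0
    {L : Type*} [LieRing L] [LieAlgebra ℝ L]
    (b : Basis (Fin 8) ℝ L)
    (hb : ∀ i j : Fin 8, ⁅b i, b j⁆ = gBr (fun k => b k) i j)
    (lam : ℝ) (hlam : lam ≠ 1)
    (W1 : Submodule ℝ L)
    (hW1 : W1 = Submodule.span ℝ {b 1, b 2 + lam • b 0, b 3})
    (h : LieSubalgebra ℝ L)
    (hh : h = LieSubalgebra.lieSpan ℝ L (W1 : Set L))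
    -- an arbitrary realization of the Carnot algebra `𝔤_lam`
    {M : Type*} [LieRing M] [LieAlgebra ℝ M]
    (c : Basis (Fin 7) ℝ M)
    (hc : ∀ i j : Fin 7, ⁅c i, c j⁆ = gmuBr lam (fun k => c k) i j) :
    -- the generated subalgebra has dimension 7
    Module.finrank ℝ h = 7 ∧
    -- it is stratified of step 3, with first stratum `W¹`
    (∃ V : ℕ → Submodule ℝ h,
      IsStratification (↥h) 3 V ∧ (∀ x : h, x ∈ V 0 ↔ (x : L) ∈ W1) ∧
      -- and it is isomorphic, as a stratified Lie algebra, to `𝔤_lam`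
      ∃ e : h ≃ₗ⁅ℝ⁆ M,
        Submodule.map (e : h →ₗ⁅ℝ⁆ M).toLinearMap (V 0)
            = Submodule.span ℝ {c 0, c 1, c 2} ∧
        Submodule.map (e : h →ₗ⁅ℝ⁆ M).toLinearMap (V 1)
            = Submodule.span ℝ {c 3, c 4, c 5} ∧
        Submodule.map (e : h →ₗ⁅ℝ⁆ M).toLinearMap (V 2)
            = Submodule.span ℝ {c 6} ) := by
  have hbr := Zfun_br lam (fun k => b k) hb
  have hli := Zfun_li lam hlam b
  set Z : Fin 7 → L := Zfun lam (fun k => b k) with hZdef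
  -- membership of the generators in h
  have hw : ∀ x ∈ ({b 1, b 2 + lam • b 0, b 3} : Set L), x ∈ h := by
    intro x hx
    rw [hh]
    exact LieSubalgebra.subset_lieSpan (by rw [hW1]; exact Submodule.subset_span hx)
  have hm0 : Z 0 ∈ h := hw (b 1) (by simp)
  have hm1 : Z 1 ∈ h := hw (b 2 + lam • b 0) (by simp)
  have hm2 : Z 2 ∈ h := hw (b 3) (by simp)
  have e3 : Z 3 = ⁅Z 0, Z 1⁆ := by rw [hbr 0 1]; simp only [gmuBr, Fin.isValue, Fin.val_zero, Fin.val_one, Fin.val_two, Fin.coe_ofNat_eq_mod, Nat.reduceMod]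
  have hm3 : Z 3 ∈ h := by rw [e3]; exact h.lie_mem hm0 hm1
  have e4 : Z 4 = ⁅Z 1, Z 2⁆ := by rw [hbr 1 2]; simp only [gmuBr, Fin.isValue, Fin.val_zero, Fin.val_one, Fin.val_two, Fin.coe_ofNat_eq_mod, Nat.reduceMod]
  have hm4 : Z 4 ∈ h := by rw [e4]; exact h.lie_mem hm1 hm2
  have e5 : Z 5 = ⁅Z 2, Z 0⁆ := by rw [hbr 2 0]; simp only [gmuBr, Fin.isValue, Fin.val_zero, Fin.val_one, Fin.val_two, Fin.coe_ofNat_eq_mod, Nat.reduceMod]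
  have hm5 : Z 5 ∈ h := by rw [e5]; exact h.lie_mem hm2 hm0
  have e6 : Z 6 = ⁅Z 4, Z 0⁆ := by rw [hbr 4 0]; simp only [gmuBr, Fin.isValue, Fin.val_zero, Fin.val_one, Fin.val_two, Fin.coe_ofNat_eq_mod, Nat.reduceMod]
  have hm6 : Z 6 ∈ h := by rw [e6]; exact h.lie_mem hm4 hm0
  have hmem : ∀ i, Z i ∈ h := by intro i; fin_cases i <;> assumption
  -- the span of the range of Z is a Lie subalgebra
  let K : LieSubalgebra ℝ L :=
    { toSubmodule := Submodule.span ℝ (Set.range Z)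
      lie_mem' := by
        intro x y hx hy
        refine lie_mem_of_span ?_ x hx y hy
        rintro _ ⟨i, rfl⟩ _ ⟨j, rfl⟩
        rw [hbr i j]
        exact gmuBr_mem_span_range lam Z i j }
  have hKh : h = K := by
    rw [hh]
    apply le_antisymm
    · rw [LieSubalgebra.lieSpan_le]
      intro x hx
      rw [hW1] at hx
      have hsub : ({b 1, b 2 + lam • b 0, b 3} : Set L) ⊆ Set.range Z := by
        rintro x (rfl | rfl | rfl)
        exacts [⟨0, rfl⟩, ⟨1, rfl⟩, ⟨2, rfl⟩]
      exact Submodule.span_le.mpr (hsub.trans Submodule.subset_span) hx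
    · intro x hx
      have hr : Set.range Z ⊆ ((LieSubalgebra.lieSpan ℝ L ↑W1 : LieSubalgebra ℝ L) :
          Set L) := by
        rintro _ ⟨i, rfl⟩
        rw [← hh]
        exact hmem i
      exact Submodule.span_le.mpr hr hx
  have hTS : h.toSubmodule = Submodule.span ℝ (Set.range Z) := by rw [hKh]
  -- a basis of h
  let ZH : Fin 7 → h := fun i => ⟨Z i, hmem i⟩
  have hZHli : LinearIndependent ℝ ZH := by
    have hcomp : h.toSubmodule.subtype ∘ ZH = Z := rfl
    exact LinearIndependent.of_comp h.toSubmodule.subtype (hcomp ▸ hli)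
  have hZHspan : ⊤ ≤ Submodule.span ℝ (Set.range ZH) := by
    have hinj := h.toSubmodule.injective_subtype
    have hmapeq : Submodule.map h.toSubmodule.subtype (Submodule.span ℝ (Set.range ZH)) =
        Submodule.map h.toSubmodule.subtype ⊤ := by
      rw [Submodule.map_span, Submodule.map_top, Submodule.range_subtype, ← Set.range_comp]
      exact hTS.symm
    exact (Submodule.map_injective_of_injective hinj hmapeq).ge
  let d : Basis (Fin 7) ℝ h := Basis.mk hZHli hZHspan
  have hdZ : ∀ k, (d k : L) = Z k := fun k => by rw [Basis.mk_apply]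
  have hd : ∀ i j, ⁅d i, d j⁆ = gmuBr lam (fun k => d k) i j := by
    intro i j
    apply Subtype.coe_injective
    have hmap := gmuBr_map h.toSubmodule.subtype lam (fun k => d k) i j
    simp only [Submodule.coe_subtype] at hmap
    calc ((⁅d i, d j⁆ : h) : L) = ⁅(d i : L), (d j : L)⁆ := rfl
      _ = ⁅Z i, Z j⁆ := by rw [hdZ, hdZ]
      _ = gmuBr lam Z i j := hbr i j
      _ = gmuBr lam (fun k => ((d k : h) : L)) i j := by simp only [hdZ]
      _ = ((gmuBr lam (fun k => d k) i j : h) : L) := hmap.symm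
  constructor
  · rw [Module.finrank_eq_card_basis d]
    simp
  · refine ⟨stratV (fun k => d k), isStratification_of_basis lam d hd, ?_, ?_⟩
    · -- first stratum is W¹
      have hmap0 : Submodule.map h.toSubmodule.subtype (stratV (fun k => d k) 0) = W1 := by
        rw [hW1]
        exact map_span_eq3 h.toSubmodule.subtype (d 0) (d 1) (d 2)
          (b 1) (b 2 + lam • b 0) (b 3) (hdZ 0) (hdZ 1) (hdZ 2)
      intro x
      constructor
      · intro hx
        rw [← hmap0]
        exact Submodule.mem_map_of_mem hx
      · intro hx
        rw [← hmap0] at hx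
        obtain ⟨y, hy, hyx⟩ := hx
        have hyx' : y = x := Subtype.coe_injective hyx
        rwa [← hyx']
    · -- the isomorphism with 𝔤_lam
      let f : h ≃ₗ[ℝ] M := d.equiv c (Equiv.refl _)
      have hfd : ∀ k, f (d k) = c k := fun k => by rw [Basis.equiv_apply]; rfl
      have hflie : ∀ x y : h,
          f.toLinearMap ⁅x, y⁆ = ⁅f.toLinearMap x, f.toLinearMap y⁆ := by
        refine map_lie_of_basis d f.toLinearMap (fun i j => ?_)
        rw [hd i j]
        have hmap := gmuBr_map f.toLinearMap lam (fun k => d k) i j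
        rw [hmap]
        simp only [LinearEquiv.coe_coe, hfd]
        exact (hc i j).symm
      let e : h ≃ₗ⁅ℝ⁆ M :=
        { toLieHom := { toLinearMap := f.toLinearMap, map_lie' := fun {x y} => hflie x y }
          invFun := f.symm
          left_inv := f.left_inv
          right_inv := f.right_inv }
      have hed : ∀ k, (e : h →ₗ⁅ℝ⁆ M).toLinearMap (d k) = c k := fun k => hfd k
      refine ⟨e, ?_, ?_, ?_⟩
      · exact map_span_eq3 _ (d 0) (d 1) (d 2) (c 0) (c 1) (c 2) (hed 0) (hed 1) (hed 2)
      · exact map_span_eq3 _ (d 3) (d 4) (d 5) (c 3) (c 4) (c 5) (hed 3) (hed 4) (hed 5)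
      · exact map_span_eq1 _ (d 6) (c 6) (hed 6)
end

section
/- Let S be a C² hypersurface without characteristic points in the Heisenberg group ℍⁿ with n ≥ 2. Then the assignment x ↦ 𝒟_x := 𝕍₁(x) ∩ T_xS defines a distribution of rank 2n−1 on S that is bracket generating of step 2: for every x ∈ S one has 𝒟_x + [𝒟,𝒟]_x = T_xS. -/
open Module

namespace Heis

/-- Points of the `n`-th Heisenberg group `ℍⁿ` in exponential coordinates:
`((x₁, …, x_n), (x_{n+1}, …, x_{2n}), y₁)`; as a smooth manifold, `ℍⁿ ≅ ℝ^{2n+1}`. -/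
abbrev Pt (n : ℕ) := (Fin n → ℝ) × (Fin n → ℝ) × ℝ

variable {n : ℕ}

/-- The left-invariant frame vector field `X_j`, `j = 1, …, n`, at `p`:
`X_j = ∂_{x_j} − ½ x_{n+j} ∂_y`. -/
noncomputable def XH (j : Fin n) (p : Pt n) : Pt n :=
  ((Pi.single j 1 : Fin n → ℝ), 0, -(1 / 2) * p.2.1 j)

/-- The left-invariant frame vector field `X_{n+j}`, `j = 1, …, n`, at `p`:
`X_{n+j} = ∂_{x_{n+j}} + ½ x_j ∂_y`. (These satisfy `[X_j, X_{n+j}] = Y₁ = ∂_y`.) -/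
noncomputable def XV (j : Fin n) (p : Pt n) : Pt n :=
  (0, (Pi.single j 1 : Fin n → ℝ), (1 / 2) * p.1 j)

/-- The horizontal space `𝕍₁(p) = span{X₁(p), …, X_{2n}(p)}`. -/
def horizAt (p : Pt n) : Submodule ℝ (Pt n) :=
  Submodule.span ℝ (Set.range (fun j => XH j p) ∪ Set.range (fun j => XV j p))

/-- The linear functional cutting out the horizontal space. -/
noncomputable def Lfun (p : Pt n) : Pt n →ₗ[ℝ] ℝ where
  toFun v := v.2.2 + (1/2) * (∑ i, p.2.1 i * v.1 i) - (1/2) * (∑ i, p.1 i * v.2.1 i)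
  map_add' v w := by
    simp only [Prod.fst_add, Prod.snd_add, Pi.add_apply, mul_add, Finset.sum_add_distrib]
    ring
  map_smul' c v := by
    simp only [Prod.smul_fst, Prod.smul_snd, Pi.smul_apply, smul_eq_mul, RingHom.id_apply,
      mul_left_comm _ c, ← Finset.mul_sum]
    ring

/-- The linear functional giving the vertical part of the derivative of a frame field. -/
noncomputable def sigmaL (u v : Fin n → ℝ) : Pt n →ₗ[ℝ] ℝ where
  toFun w := (1/2) * (∑ i, w.1 i * v i) - (1/2) * (∑ i, w.2.1 i * u i)
  map_add' a b := by
    simp only [Prod.fst_add, Prod.snd_add, Pi.add_apply, add_mul, Finset.sum_add_distrib]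
    ring
  map_smul' c a := by
    simp only [Prod.smul_fst, Prod.smul_snd, Pi.smul_apply, smul_eq_mul, RingHom.id_apply,
      mul_assoc c, ← Finset.mul_sum]
    ring

/-- The general horizontal "frame-type" field. -/
noncomputable def ZF (u v : Fin n → ℝ) (q : Pt n) : Pt n := (u, v, sigmaL u v q)

noncomputable def dZF (u v : Fin n → ℝ) : Pt n →L[ℝ] Pt n :=
  (LinearMap.prod 0 (LinearMap.prod 0 (sigmaL u v))).toContinuousLinearMap

lemma dZF_apply (u v : Fin n → ℝ) (w : Pt n) :
    dZF u v w = ((0 : Fin n → ℝ), (0 : Fin n → ℝ), sigmaL u v w) := rfl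

lemma ZF_eq (u v : Fin n → ℝ) : ZF u v = fun q => dZF u v q + ((u, v, 0) : Pt n) := by
  funext q
  simp [ZF, dZF_apply, Prod.ext_iff]

lemma hasFDerivAt_ZF (u v : Fin n → ℝ) (q : Pt n) :
    HasFDerivAt (ZF u v) (dZF u v) q := by
  rw [ZF_eq]
  exact (dZF u v).hasFDerivAt.add_const _

lemma contDiff_ZF (u v : Fin n → ℝ) : ContDiff ℝ 1 (ZF u v) := by
  rw [ZF_eq]
  exact (dZF u v).contDiff.add contDiff_const

lemma XH_eq (j : Fin n) : XH j = ZF (Pi.single j 1) 0 := by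
  funext q
  simp [XH, ZF, sigmaL, Pi.single_apply, mul_ite, Finset.sum_ite_eq', Prod.ext_iff]

lemma XV_eq (j : Fin n) : XV j = ZF 0 (Pi.single j 1) := by
  funext q
  simp [XV, ZF, sigmaL, Pi.single_apply, mul_ite, Finset.sum_ite_eq', Prod.ext_iff]

lemma Lfun_ZF (u v : Fin n → ℝ) (p : Pt n) : Lfun p (ZF u v p) = 0 := by
  simp only [Lfun, ZF, sigmaL, LinearMap.coe_mk, AddHom.coe_mk, mul_comm]
  ring

lemma Lfun_dZF (p : Pt n) (u v : Fin n → ℝ) (w : Pt n) :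
    Lfun p (dZF u v w) = sigmaL u v w := by
  simp only [dZF_apply, Lfun, LinearMap.coe_mk, AddHom.coe_mk, Pi.zero_apply, mul_zero,
    Finset.sum_const_zero]
  ring

lemma Lfun_vert (p : Pt n) : Lfun p (0, 0, 1) = 1 := by
  simp [Lfun]

lemma horizAt_eq (p : Pt n) : horizAt p = LinearMap.ker (Lfun p) := by
  apply le_antisymm
  · rw [horizAt, Submodule.span_le]
    rintro x (⟨j, rfl⟩ | ⟨j, rfl⟩) <;>
      simp only [SetLike.mem_coe, LinearMap.mem_ker, XH_eq, XV_eq, Lfun_ZF]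
  · intro v hv
    rw [LinearMap.mem_ker] at hv
    have hv' : v.2.2 = (1/2) * (∑ i, p.1 i * v.2.1 i) - (1/2) * (∑ i, p.2.1 i * v.1 i) := by
      have := hv
      simp only [Lfun, LinearMap.coe_mk, AddHom.coe_mk] at this
      linarith
    have hrepr : v = (∑ j, v.1 j • XH j p) + (∑ j, v.2.1 j • XV j p) := by
      refine Prod.ext ?_ (Prod.ext ?_ ?_)
      · simp only [Prod.fst_add, Prod.fst_sum, Prod.smul_fst, XH, XV, smul_zero,
          Finset.sum_const_zero, add_zero]
        funext i
        simp [Finset.sum_apply, Pi.single_apply, mul_ite, Finset.sum_ite_eq']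
      · simp only [Prod.snd_add, Prod.fst_add, Prod.snd_sum, Prod.fst_sum, Prod.smul_snd,
          Prod.smul_fst, XH, XV, smul_zero, Finset.sum_const_zero, zero_add]
        funext i
        simp [Finset.sum_apply, Pi.single_apply, mul_ite, Finset.sum_ite_eq']
      · simp only [Prod.snd_add, Prod.snd_sum, Prod.smul_snd, XH, XV, smul_eq_mul, hv']
        rw [Finset.mul_sum, Finset.mul_sum, ← Finset.sum_sub_distrib, ← Finset.sum_add_distrib]
        exact Finset.sum_congr rfl fun i _ => by ring
    rw [hrepr]
    apply Submodule.add_mem <;> refine Submodule.sum_mem _ fun j _ => Submodule.smul_mem _ _ ?_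
    · exact Submodule.subset_span (Or.inl ⟨j, rfl⟩)
    · exact Submodule.subset_span (Or.inr ⟨j, rfl⟩)

/-- The intersection `𝒟_x = 𝕍₁(x) ∩ T_xS` for the hypersurface locally defined by `f`
(whose Euclidean tangent space at `x` is `ker (df_x)`). -/
noncomputable def DD (f : Pt n → ℝ) (x : Pt n) : Submodule ℝ (Pt n) :=
  horizAt x ⊓ LinearMap.ker (fderiv ℝ f x : Pt n →ₗ[ℝ] ℝ)

lemma finrank_Pt : finrank ℝ (Pt n) = 2 * n + 1 := by
  simp [Pt, Module.finrank_prod, Module.finrank_pi]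
  ring

lemma exists_ne_zero_of_clm_ne_zero {φ : Pt n →L[ℝ] ℝ} (h : φ ≠ 0) : ∃ v, φ v ≠ 0 := by
  by_contra hc
  push_neg at hc
  exact h (ContinuousLinearMap.ext fun v => by simp [hc v])

lemma finrank_ker_fderiv {f : Pt n → ℝ} {x : Pt n} (h : fderiv ℝ f x ≠ 0) :
    finrank ℝ (LinearMap.ker (fderiv ℝ f x : Pt n →ₗ[ℝ] ℝ)) = 2 * n := by
  obtain ⟨v, hv⟩ := exists_ne_zero_of_clm_ne_zero h
  set ℓ : Pt n →ₗ[ℝ] ℝ := (fderiv ℝ f x : Pt n →ₗ[ℝ] ℝ)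
  have hrange : LinearMap.range ℓ = ⊤ := by
    rw [LinearMap.range_eq_top]
    intro r
    exact ⟨(r / fderiv ℝ f x v) • v, by simp [ℓ, div_mul_cancel₀ _ hv]⟩
  have := LinearMap.finrank_range_add_finrank_ker ℓ
  rw [hrange, finrank_top, finrank_Pt] at this
  have hker : LinearMap.ker (fderiv ℝ f x : Pt n →ₗ[ℝ] ℝ) = LinearMap.ker ℓ := rfl
  have h1 : finrank ℝ ℝ = 1 := Module.finrank_self ℝ
  rw [hker]
  omega

lemma finrank_DD {f : Pt n → ℝ} {x : Pt n} (h : fderiv ℝ f x ≠ 0)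
    (hnc : ¬horizAt x ≤ LinearMap.ker (fderiv ℝ f x : Pt n →ₗ[ℝ] ℝ)) :
    finrank ℝ (DD f x) = 2 * n - 1 := by
  obtain ⟨w, hw, hw'⟩ := SetLike.not_le_iff_exists.1 hnc
  rw [horizAt_eq, LinearMap.mem_ker] at hw
  set ℓ : Pt n →ₗ[ℝ] ℝ := (fderiv ℝ f x : Pt n →ₗ[ℝ] ℝ)
  set Φ : Pt n →ₗ[ℝ] ℝ × ℝ := (Lfun x).prod ℓ
  have hDD : DD f x = LinearMap.ker Φ := by
    rw [DD, horizAt_eq, LinearMap.ker_prod]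
  have hrange : LinearMap.range Φ = ⊤ := by
    rw [LinearMap.range_eq_top]
    rintro ⟨r, s⟩
    have hLw : Lfun x w = 0 := hw
    have hlw : ℓ w ≠ 0 := fun hc => hw' (LinearMap.mem_ker.2 hc)
    refine ⟨r • ((0 : Fin n → ℝ), (0 : Fin n → ℝ), (1:ℝ))
      + ((s - r * ℓ ((0:Fin n → ℝ), (0:Fin n → ℝ), (1:ℝ))) / ℓ w) • w, ?_⟩
    have h1 : Φ ((0 : Fin n → ℝ), (0 : Fin n → ℝ), (1:ℝ))
        = (1, ℓ ((0 : Fin n → ℝ), (0 : Fin n → ℝ), (1:ℝ))) := by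
      simp only [Φ, LinearMap.prod_apply, Pi.prod, Function.prod, Lfun_vert]
    have h2 : Φ w = (0, ℓ w) := by
      simp only [Φ, LinearMap.prod_apply, Pi.prod, Function.prod, hLw]
    rw [map_add, map_smul, map_smul, h1, h2, Prod.smul_mk, Prod.smul_mk, Prod.mk_add_mk]
    simp only [smul_eq_mul, mul_zero, mul_one, add_zero, Prod.mk.injEq]
    refine ⟨trivial, ?_⟩
    field_simp
    ring
  have := LinearMap.finrank_range_add_finrank_ker Φ
  rw [hrange, finrank_top, hDD.symm, finrank_Pt] at this
  have h2 : finrank ℝ (ℝ × ℝ) = 2 := by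
    simp [Module.finrank_prod]
  omega

/-- Key tangency lemma via the implicit function theorem: the derivative of a function
vanishing on the level set `{f = 0}`, in a direction tangent to the level set, vanishes. -/
lemma tangency {E : Type*} [NormedAddCommGroup E] [NormedSpace ℝ E] [CompleteSpace E]
    {f h : E → ℝ} {p : E} {T : Set E}
    (hfd : HasStrictFDerivAt f (fderiv ℝ f p) p)
    (hT : T ∈ nhds p) (hh0 : ∀ x ∈ T, f x = 0 → h x = 0)
    (hp : f p = 0) (hne : fderiv ℝ f p ≠ 0)
    (hh : DifferentiableAt ℝ h p)
    {w : E} (hw : fderiv ℝ f p w = 0) : fderiv ℝ h p w = 0 := by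
  set f' := fderiv ℝ f p with hf'
  have hsurj : f'.range = ⊤ := by
    rw [LinearMap.range_eq_top]
    obtain ⟨v, hv⟩ : ∃ v, f' v ≠ 0 := by
      by_contra hc
      push_neg at hc
      exact hne (ContinuousLinearMap.ext fun v => by simp [hc v])
    intro r
    exact ⟨(r / f' v) • v, by simp [div_mul_cancel₀ _ hv]⟩
  set ψ : f'.ker → E := hfd.implicitFunction f f' hsurj (f p) with hψdef
  have hψ0 : ψ 0 = p := hfd.implicitFunction_apply_image hsurj
  have hψd : HasStrictFDerivAt ψ f'.ker.subtypeL 0 :=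
    hfd.to_implicitFunction hsurj
  have h3 : ∀ᶠ z in nhds (0 : f'.ker), f (ψ z) = f p := by
    have ht : Filter.Tendsto (fun z : f'.ker => ((f p : ℝ), z))
        (nhds 0) (nhds (f p, 0)) := by
      exact (continuous_const.prodMk continuous_id).tendsto 0
    exact ht.eventually (hfd.map_implicitFunction_eq hsurj)
  have hcont : Filter.Tendsto ψ (nhds 0) (nhds p) := by
    have := hψd.differentiableAt.continuousAt
    rwa [ContinuousAt, hψ0] at this
  have h4 : ∀ᶠ z in nhds (0 : f'.ker), ψ z ∈ T := hcont.eventually hT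
  have h5 : (fun z => h (ψ z)) =ᶠ[nhds (0 : f'.ker)] fun _ => 0 := by
    filter_upwards [h3, h4] with z h3z h4z
    exact hh0 _ h4z (by rw [h3z, hp])
  have h6 : HasFDerivAt (fun z => h (ψ z)) ((fderiv ℝ h p).comp f'.ker.subtypeL) 0 := by
    have hhp : HasFDerivAt h (fderiv ℝ h p) (ψ 0) := by rw [hψ0]; exact hh.hasFDerivAt
    exact hhp.comp 0 hψd.hasFDerivAt
  have h7 : HasFDerivAt (fun z => h (ψ z)) (0 : f'.ker →L[ℝ] ℝ) 0 :=
    (h5.hasFDerivAt_iff).2 (hasFDerivAt_const (0:ℝ) (0 : f'.ker))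
  have h8 := h6.unique h7
  have := congrArg (fun (T : f'.ker →L[ℝ] ℝ) => T ⟨w, LinearMap.mem_ker.2 hw⟩) h8
  simpa [ContinuousLinearMap.comp_apply] using this

/-- `S` is a `C²` hypersurface without characteristic points: locally the zero set of a
`C²` function with nonvanishing gradient, such that at no point of `S` the horizontal
space is contained in the Euclidean tangent space. -/
def IsC2NonCharHypersurface (S : Set (Pt n)) : Prop :=
  ∀ p ∈ S, ∃ (U : Set (Pt n)) (f : Pt n → ℝ),
    IsOpen U ∧ p ∈ U ∧ ContDiff ℝ 2 f ∧
    S ∩ U = {x | f x = 0} ∩ U ∧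
    (∀ x ∈ U, fderiv ℝ f x ≠ 0) ∧
    ∀ x ∈ S ∩ U, ¬horizAt x ≤ LinearMap.ker (fderiv ℝ f x : Pt n →ₗ[ℝ] ℝ)

/-- The span `[𝒟,𝒟]_p` of the brackets at `p` of `C¹` local sections of the distribution
`𝒟 = 𝕍₁ ∩ TS` (extended near `S`), for `S` locally defined by `f` on `U`. -/
noncomputable def bracketAt (S : Set (Pt n)) (f : Pt n → ℝ) (U : Set (Pt n)) (p : Pt n) :
    Submodule ℝ (Pt n) :=
  Submodule.span ℝ
    {b : Pt n | ∃ (V W : Pt n → Pt n) (U' : Set (Pt n)),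
      IsOpen U' ∧ p ∈ U' ∧ U' ⊆ U ∧
      ContDiffOn ℝ 1 V U' ∧ ContDiffOn ℝ 1 W U' ∧
      (∀ y ∈ U' ∩ S, V y ∈ DD f y) ∧ (∀ y ∈ U' ∩ S, W y ∈ DD f y) ∧
      b = fderiv ℝ W p (V p) - fderiv ℝ V p (W p)}

lemma bracket_le_ker {S U : Set (Pt n)} {f : Pt n → ℝ} (hU : IsOpen U)
    (hf : ContDiff ℝ 2 f) (hzero : S ∩ U = {x | f x = 0} ∩ U)
    (hgrad : ∀ x ∈ U, fderiv ℝ f x ≠ 0)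
    {x : Pt n} (hx : x ∈ S ∩ U) :
    bracketAt S f U x ≤ LinearMap.ker (fderiv ℝ f x : Pt n →ₗ[ℝ] ℝ) := by
  rw [bracketAt, Submodule.span_le]
  rintro b ⟨V, W, U', hU', hxU', hU'U, hCV, hCW, hVD, hWD, rfl⟩
  set g := fderiv ℝ f with hgdef
  have hg : ContDiff ℝ 1 g := hf.fderiv_right (by norm_num)
  have hgd : DifferentiableAt ℝ g x := (hg.differentiable (by norm_num)) x
  have hVd : DifferentiableAt ℝ V x :=
    (hCV.differentiableOn (by norm_num)).differentiableAt (hU'.mem_nhds hxU')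
  have hWd : DifferentiableAt ℝ W x :=
    (hCW.differentiableOn (by norm_num)).differentiableAt (hU'.mem_nhds hxU')
  have hVx : V x ∈ DD f x := hVD x ⟨hxU', hx.1⟩
  have hWx : W x ∈ DD f x := hWD x ⟨hxU', hx.1⟩
  have hVker : g x (V x) = 0 := hVx.2
  have hWker : g x (W x) = 0 := hWx.2
  have hT : U' ∈ nhds x := hU'.mem_nhds hxU'
  have hfx0 : f x = 0 := by
    have h' := hx
    rw [hzero] at h'
    exact h'.1
  have hfd : HasStrictFDerivAt f (fderiv ℝ f x) x :=
    hf.contDiffAt.hasStrictFDerivAt (by norm_num)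
  have memS : ∀ y ∈ U', f y = 0 → y ∈ U' ∩ S := by
    intro y hyU' hfy
    have h' : y ∈ ({x | f x = 0} ∩ U) := ⟨hfy, hU'U hyU'⟩
    rw [← hzero] at h'
    exact ⟨hyU', h'.1⟩
  have tangW : fderiv ℝ (fun y => g y (W y)) x (V x) = 0 := by
    refine tangency hfd hT ?_ hfx0 (hgrad x hx.2) (hgd.clm_apply hWd) hVker
    intro y hyU' hfy
    exact (hWD y (memS y hyU' hfy)).2
  have tangV : fderiv ℝ (fun y => g y (V y)) x (W x) = 0 := by
    refine tangency hfd hT ?_ hfx0 (hgrad x hx.2) (hgd.clm_apply hVd) hWker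
    intro y hyU' hfy
    exact (hVD y (memS y hyU' hfy)).2
  rw [fderiv_clm_apply hgd hWd] at tangW
  rw [fderiv_clm_apply hgd hVd] at tangV
  have hsymm : fderiv ℝ g x (V x) (W x) = fderiv ℝ g x (W x) (V x) :=
    (hf.contDiffAt.isSymmSndFDerivAt (by simp [minSmoothness_of_isRCLikeNormedField])) (V x) (W x)
  simp only [ContinuousLinearMap.add_apply, ContinuousLinearMap.coe_comp', Function.comp_apply,
    ContinuousLinearMap.flip_apply] at tangW tangV
  have : g x (fderiv ℝ W x (V x) - fderiv ℝ V x (W x)) = 0 := by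
    rw [map_sub]
    linarith [tangW, tangV, hsymm]
  exact LinearMap.mem_ker.2 this

lemma sum_single_right (m : Fin n) (z : Fin n → ℝ) :
    ∑ i, z i * (Pi.single m 1 : Fin n → ℝ) i = z m := by
  simp [Pi.single_apply, mul_ite, Finset.sum_ite_eq']

lemma exists_bracket_field {f : Pt n → ℝ} (hf : ContDiff ℝ 2 f) (m : Fin n)
    (u0 v0 : Fin n → ℝ) (hu : u0 m = 0) (hv : v0 m = 0) (p : Pt n) :
    ∃ V W : Pt n → Pt n, ContDiff ℝ 1 V ∧ ContDiff ℝ 1 W ∧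
      (∀ y, V y ∈ DD f y) ∧ (∀ y, W y ∈ DD f y) ∧
      Lfun p (fderiv ℝ W p (V p) - fderiv ℝ V p (W p))
        = (fderiv ℝ f p (ZF u0 v0 p))^2 := by
  set g := fderiv ℝ f with hgdef
  have hg : ContDiff ℝ 1 g := hf.fderiv_right (by norm_num)
  set em : Fin n → ℝ := Pi.single m 1 with hem
  refine ⟨fun y => g y (ZF u0 v0 y) • ZF em 0 y - g y (ZF em 0 y) • ZF u0 v0 y,
    fun y => g y (ZF u0 v0 y) • ZF 0 em y - g y (ZF 0 em y) • ZF u0 v0 y, ?_, ?_, ?_, ?_, ?_⟩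
  · exact (((hg.clm_apply (contDiff_ZF u0 v0)).smul (contDiff_ZF em 0)).sub
      ((hg.clm_apply (contDiff_ZF em 0)).smul (contDiff_ZF u0 v0)))
  · exact (((hg.clm_apply (contDiff_ZF u0 v0)).smul (contDiff_ZF 0 em)).sub
      ((hg.clm_apply (contDiff_ZF 0 em)).smul (contDiff_ZF u0 v0)))
  · intro y
    rw [DD, Submodule.mem_inf]
    constructor
    · rw [horizAt_eq]
      refine LinearMap.mem_ker.2 ?_
      simp [map_sub, map_smul, Lfun_ZF]
    · refine LinearMap.mem_ker.2 ?_
      simp only [map_sub, map_smul, smul_eq_mul, ContinuousLinearMap.coe_coe, ← hgdef]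
      ring
  · intro y
    rw [DD, Submodule.mem_inf]
    constructor
    · rw [horizAt_eq]
      refine LinearMap.mem_ker.2 ?_
      simp [map_sub, map_smul, Lfun_ZF]
    · refine LinearMap.mem_ker.2 ?_
      simp only [map_sub, map_smul, smul_eq_mul, ContinuousLinearMap.coe_coe, ← hgdef]
      ring
  · -- the bracket computation
    have hgp : HasFDerivAt g (fderiv ℝ g p) p := ((hg.differentiable (by norm_num)) p).hasFDerivAt
    set Dg := fderiv ℝ g p with hDg
    have hcZ : HasFDerivAt (fun y => g y (ZF u0 v0 y))
        ((g p).comp (dZF u0 v0) + Dg.flip (ZF u0 v0 p)) p :=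
      hgp.clm_apply (hasFDerivAt_ZF u0 v0 p)
    have hcA : HasFDerivAt (fun y => g y (ZF em 0 y))
        ((g p).comp (dZF em 0) + Dg.flip (ZF em 0 p)) p :=
      hgp.clm_apply (hasFDerivAt_ZF em 0 p)
    have hcB : HasFDerivAt (fun y => g y (ZF 0 em y))
        ((g p).comp (dZF 0 em) + Dg.flip (ZF 0 em p)) p :=
      hgp.clm_apply (hasFDerivAt_ZF 0 em p)
    have hV : HasFDerivAt (fun y => g y (ZF u0 v0 y) • ZF em 0 y - g y (ZF em 0 y) • ZF u0 v0 y)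
        ((g p (ZF u0 v0 p) • dZF em 0
            + ((g p).comp (dZF u0 v0) + Dg.flip (ZF u0 v0 p)).smulRight (ZF em 0 p))
          - (g p (ZF em 0 p) • dZF u0 v0
            + ((g p).comp (dZF em 0) + Dg.flip (ZF em 0 p)).smulRight (ZF u0 v0 p))) p :=
      (hcZ.smul (hasFDerivAt_ZF em 0 p)).sub (hcA.smul (hasFDerivAt_ZF u0 v0 p))
    have hW : HasFDerivAt (fun y => g y (ZF u0 v0 y) • ZF 0 em y - g y (ZF 0 em y) • ZF u0 v0 y)
        ((g p (ZF u0 v0 p) • dZF 0 em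
            + ((g p).comp (dZF u0 v0) + Dg.flip (ZF u0 v0 p)).smulRight (ZF 0 em p))
          - (g p (ZF 0 em p) • dZF u0 v0
            + ((g p).comp (dZF 0 em) + Dg.flip (ZF 0 em p)).smulRight (ZF u0 v0 p))) p :=
      (hcZ.smul (hasFDerivAt_ZF 0 em p)).sub (hcB.smul (hasFDerivAt_ZF u0 v0 p))
    rw [hV.fderiv, hW.fderiv]
    have he2 : ∑ i, em i * em i = 1 := by
      rw [hem, sum_single_right, Pi.single_eq_same]
    have hu0em : ∑ i, u0 i * em i = 0 := by rw [hem, sum_single_right, hu]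
    have hv0em : ∑ i, v0 i * em i = 0 := by rw [hem, sum_single_right, hv]
    have hemv0 : ∑ i, em i * v0 i = 0 := by
      rw [show (∑ i, em i * v0 i) = ∑ i, v0 i * em i from
        Finset.sum_congr rfl fun i _ => mul_comm _ _, hv0em]
    have hemu0 : ∑ i, em i * u0 i = 0 := by
      rw [show (∑ i, em i * u0 i) = ∑ i, u0 i * em i from
        Finset.sum_congr rfl fun i _ => mul_comm _ _, hu0em]
    have hcomm : ∑ i, v0 i * u0 i = ∑ i, u0 i * v0 i :=
      Finset.sum_congr rfl fun i _ => mul_comm _ _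
    have t1 : sigmaL (0 : Fin n → ℝ) em (ZF em 0 p) = 1/2 := by
      simp only [sigmaL, LinearMap.coe_mk, AddHom.coe_mk, ZF, Pi.zero_apply, zero_mul, mul_zero,
        Finset.sum_const_zero, he2]
      ring
    have t2 : sigmaL (0 : Fin n → ℝ) em (ZF u0 v0 p) = 0 := by
      simp only [sigmaL, LinearMap.coe_mk, AddHom.coe_mk, ZF, Pi.zero_apply, zero_mul, mul_zero,
        Finset.sum_const_zero, hu0em]
      ring
    have t3 : sigmaL em (0 : Fin n → ℝ) (ZF 0 em p) = -(1/2) := by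
      simp only [sigmaL, LinearMap.coe_mk, AddHom.coe_mk, ZF, Pi.zero_apply, zero_mul, mul_zero,
        Finset.sum_const_zero, he2]
      ring
    have t4 : sigmaL em (0 : Fin n → ℝ) (ZF u0 v0 p) = 0 := by
      simp only [sigmaL, LinearMap.coe_mk, AddHom.coe_mk, ZF, Pi.zero_apply, zero_mul, mul_zero,
        Finset.sum_const_zero, hv0em]
      ring
    have t5 : sigmaL u0 v0 (ZF em 0 p) = 0 := by
      simp only [sigmaL, LinearMap.coe_mk, AddHom.coe_mk, ZF, Pi.zero_apply, zero_mul, mul_zero,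
        Finset.sum_const_zero, hemv0]
      ring
    have t6 : sigmaL u0 v0 (ZF 0 em p) = 0 := by
      simp only [sigmaL, LinearMap.coe_mk, AddHom.coe_mk, ZF, Pi.zero_apply, zero_mul, mul_zero,
        Finset.sum_const_zero, hemu0]
      ring
    have t7 : sigmaL u0 v0 (ZF u0 v0 p) = 0 := by
      simp only [sigmaL, LinearMap.coe_mk, AddHom.coe_mk, ZF, hcomm]
      ring
    have t8 : sigmaL (0 : Fin n → ℝ) em (ZF 0 em p) = 0 := by
      simp only [sigmaL, LinearMap.coe_mk, AddHom.coe_mk, ZF, Pi.zero_apply, zero_mul, mul_zero,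
        Finset.sum_const_zero]
      ring
    have t9 : sigmaL em (0 : Fin n → ℝ) (ZF em 0 p) = 0 := by
      simp only [sigmaL, LinearMap.coe_mk, AddHom.coe_mk, ZF, Pi.zero_apply, zero_mul, mul_zero,
        Finset.sum_const_zero]
      ring
    simp only [map_sub, ContinuousLinearMap.sub_apply, ContinuousLinearMap.add_apply,
      ContinuousLinearMap.smul_apply, ContinuousLinearMap.smulRight_apply,
      ContinuousLinearMap.coe_comp', Function.comp_apply, ContinuousLinearMap.flip_apply,
      map_add, map_smul, smul_eq_mul, Lfun_ZF, Lfun_dZF, mul_zero, add_zero, sub_zero,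
      t1, t2, t3, t4, t5, t6, t7, t8, t9]
    ring

/-- let `S` be a `C²` hypersurface without characteristic points in `ℍⁿ`,
`n ≥ 2`. Then `x ↦ 𝒟_x = 𝕍₁(x) ∩ T_xS` is a distribution of rank `2n − 1` on `S` which is
bracket generating of step 2: `𝒟_x + [𝒟,𝒟]_x = T_xS` for every `x ∈ S`. (The claims are
stated via an arbitrary local defining function `f` of `S`.) -/
theorem stmt15 {n : ℕ} (hn : 2 ≤ n) (S : Set (Pt n))
    (hS : IsC2NonCharHypersurface S)
    (p : Pt n) (hp : p ∈ S) (U : Set (Pt n)) (f : Pt n → ℝ)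
    (hU : IsOpen U) (hpU : p ∈ U) (hf : ContDiff ℝ 2 f)
    (hzero : S ∩ U = {x | f x = 0} ∩ U)
    (hgrad : ∀ x ∈ U, fderiv ℝ f x ≠ 0)
    (hnc : ∀ x ∈ S ∩ U, ¬horizAt x ≤ LinearMap.ker (fderiv ℝ f x : Pt n →ₗ[ℝ] ℝ)) :
    ∀ x ∈ S ∩ U,
      finrank ℝ (DD f x) = 2 * n - 1 ∧
      DD f x ⊔ bracketAt S f U x = LinearMap.ker (fderiv ℝ f x : Pt n →ₗ[ℝ] ℝ) := by
  intro x hx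
  have hgx : fderiv ℝ f x ≠ 0 := hgrad x hx.2
  have hncx := hnc x hx
  refine ⟨finrank_DD hgx hncx, ?_⟩
  -- find a frame vector not annihilated by df
  have hexj : ∃ j : Fin n, fderiv ℝ f x (XH j x) ≠ 0 ∨ fderiv ℝ f x (XV j x) ≠ 0 := by
    by_contra hc
    push_neg at hc
    apply hncx
    rw [horizAt, Submodule.span_le]
    rintro z (⟨j, rfl⟩ | ⟨j, rfl⟩)
    · exact LinearMap.mem_ker.2 (hc j).1
    · exact LinearMap.mem_ker.2 (hc j).2
  obtain ⟨j, hj⟩ := hexj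
  -- pick m ≠ j
  obtain ⟨m, hmj⟩ : ∃ m : Fin n, m ≠ j := by
    rcases eq_or_ne j ⟨0, by omega⟩ with h0 | h0
    · exact ⟨⟨1, by omega⟩, by rw [h0]; simp [Fin.ext_iff]⟩
    · exact ⟨⟨0, by omega⟩, fun h => h0 h.symm⟩
  -- choose the auxiliary frame field Z
  have hkey : ∃ u0 v0 : Fin n → ℝ, u0 m = 0 ∧ v0 m = 0 ∧ fderiv ℝ f x (ZF u0 v0 x) ≠ 0 := by
    rcases hj with hj | hj
    · exact ⟨Pi.single j 1, 0, Pi.single_eq_of_ne hmj 1, rfl, by rwa [← XH_eq]⟩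
    · exact ⟨0, Pi.single j 1, rfl, Pi.single_eq_of_ne hmj 1, by rwa [← XV_eq]⟩
  obtain ⟨u0, v0, hu, hv, hα⟩ := hkey
  obtain ⟨V, W, hCV, hCW, hVD, hWD, hLb⟩ := exists_bracket_field hf m u0 v0 hu hv x
  set b := fderiv ℝ W x (V x) - fderiv ℝ V x (W x) with hbdef
  have hbmem : b ∈ bracketAt S f U x :=
    Submodule.subset_span ⟨V, W, U, hU, hx.2, subset_rfl, hCV.contDiffOn, hCW.contDiffOn,
      fun y _ => hVD y, fun y _ => hWD y, rfl⟩
  have hbr_le : bracketAt S f U x ≤ LinearMap.ker (fderiv ℝ f x : Pt n →ₗ[ℝ] ℝ) :=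
    bracket_le_ker hU hf hzero hgrad hx
  have hbnotDD : b ∉ DD f x := by
    intro hb
    have h0 : Lfun x b = 0 := by
      have h1 := hb.1
      rw [horizAt_eq] at h1
      exact h1
    have h2 : (fderiv ℝ f x (ZF u0 v0 x))^2 = 0 := hLb.symm.trans h0
    exact pow_ne_zero 2 hα h2
  have hsup_le : DD f x ⊔ bracketAt S f U x ≤ LinearMap.ker (fderiv ℝ f x : Pt n →ₗ[ℝ] ℝ) :=
    sup_le inf_le_right hbr_le
  have hb_sup : b ∈ DD f x ⊔ bracketAt S f U x := Submodule.mem_sup_right hbmem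
  have hlt : DD f x < DD f x ⊔ bracketAt S f U x :=
    lt_of_le_of_ne le_sup_left (fun h => hbnotDD (h ▸ hb_sup))
  have hfr : finrank ℝ (DD f x) < finrank ℝ (DD f x ⊔ bracketAt S f U x : Submodule ℝ (Pt n)) :=
    Submodule.finrank_lt_finrank_of_lt hlt
  have h1 : finrank ℝ (DD f x) = 2*n-1 := finrank_DD hgx hncx
  have h2 : finrank ℝ (LinearMap.ker (fderiv ℝ f x : Pt n →ₗ[ℝ] ℝ)) = 2*n := finrank_ker_fderiv hgx
  have h3 : finrank ℝ (DD f x ⊔ bracketAt S f U x : Submodule ℝ (Pt n))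
      ≤ finrank ℝ (LinearMap.ker (fderiv ℝ f x : Pt n →ₗ[ℝ] ℝ)) := Submodule.finrank_mono hsup_le
  exact Submodule.eq_of_le_of_finrank_le hsup_le (by omega)

end Heis
end
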